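/- Let α ∈ (0,1) and for R > 0 and each nonnegative integer k define λ_k(R) = ∫_ℝ (1 − cos(kt)) |t|^{−2−α} dt − ∫_ℝ (1 + cos(kt)) ( 1 + (2R/|t|)² )^{−(2+α)/2} |t|^{−2−α} dt (both integrals converge absolutely). Let R = R(α) > 0 be the unique value with λ₁(R) = 0. Then λ₀(R) < 0 = λ₁(R) < λ₂(R) < λ₃(R) < ⋯, i.e. the sequence (λ_k(R))_{k≥0} is strictly increasing and λ₁(R) = 0. -/

import Mathlib

open MeasureTheory Filter Topology Real

/-- `λ_k(R) = ∫_ℝ (1−cos(kt))|t|^{−2−α} dt − ∫_ℝ (1+cos(kt))(1+(2R/|t|)²)^{−(2+α)/2}|t|^{−2−α} dt`. -/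
noncomputable def lamK (α R : ℝ) (k : ℕ) : ℝ :=
  (∫ t : ℝ, (1 - Real.cos (k * t)) * |t| ^ (-(2 + α))) -
    ∫ t : ℝ, (1 + Real.cos (k * t)) * (1 + (2 * R / |t|) ^ 2) ^ (-(2 + α) / 2) * |t| ^ (-(2 + α))

open Set

section GaussCos
open Complex

lemma integrable_cos_gauss (b c : ℝ) (hb : 0 < b) :
    Integrable (fun x : ℝ => Real.cos (c * x) * Real.exp (-b * x ^ 2)) := by
  apply (integrable_exp_neg_mul_sq hb).mono'
  · exact ((Real.continuous_cos.comp (continuous_const.mul continuous_id)).mul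
      ((continuous_const.mul (continuous_pow 2)).rexp)).aestronglyMeasurable
  · filter_upwards with x
    rw [Real.norm_eq_abs, abs_mul, abs_of_pos (Real.exp_pos _)]
    exact mul_le_of_le_one_left (Real.exp_pos _).le (Real.abs_cos_le_one _)

lemma gauss_cos (b c : ℝ) (hb : 0 < b) :
    ∫ x : ℝ, Real.cos (c * x) * Real.exp (-b * x ^ 2)
      = Real.sqrt (π / b) * Real.exp (-c ^ 2 / (4 * b)) := by
  have h := fourierIntegral_gaussian (b := (b : ℂ)) (by simpa using hb) (c : ℂ)
  have hint : Integrable (fun x : ℝ => Complex.exp (Complex.I * c * x) * Complex.exp (-b * x ^ 2)) := by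
    have h0 := integrable_cexp_quadratic (b := (b:ℂ)) (by simpa using hb) (Complex.I * c) 0
    apply h0.congr
    filter_upwards with x
    rw [← Complex.exp_add]
    ring_nf
  have h2 : (∫ x : ℝ, Complex.exp (Complex.I * c * x) * Complex.exp (-b * x ^ 2)).re
      = ∫ x : ℝ, Real.cos (c * x) * Real.exp (-b * x ^ 2) := by
    change Complex.reCLM (∫ x : ℝ, Complex.exp (Complex.I * c * x) * Complex.exp (-b * x ^ 2)) = _
    rw [← Complex.reCLM.integral_comp_comm hint]
    apply integral_congr_ae; filter_upwards with x
    have e1 : Complex.I * c * x + -b * x ^ 2 = (((-b * x ^ 2 : ℝ) : ℂ)) + (c * x : ℝ) * Complex.I := by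
      push_cast; ring
    show (_ * _ : ℂ).re = _
    rw [← Complex.exp_add, e1, Complex.exp_add, ← Complex.ofReal_exp, Complex.re_ofReal_mul,
      Complex.exp_ofReal_mul_I_re, mul_comm]
  rw [← h2, h]
  have e2 : ((π : ℂ) / b) ^ (1 / 2 : ℂ) = ((π / b : ℝ) : ℂ) ^ ((1 / 2 : ℝ) : ℂ) := by push_cast; ring_nf
  have e3 : (-(c:ℂ) ^ 2 / (4 * b)) = ((-c ^ 2 / (4 * b) : ℝ) : ℂ) := by push_cast; ring
  rw [e2, ← Complex.ofReal_cpow (by positivity), e3, ← Complex.ofReal_exp, ← Complex.ofReal_mul,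
    Complex.ofReal_re, ← Real.sqrt_eq_rpow]

end GaussCos

-- Gamma kernel integrability
lemma gammaker_int {p : ℝ} (hp : 0 < p) {c : ℝ} (hc : 0 < c) :
    IntegrableOn (fun u : ℝ => u ^ (p - 1) * Real.exp (-(c * u))) (Ioi 0) := by
  have h := integrableOn_rpow_mul_exp_neg_mul_rpow (p := 1) (s := p - 1) (b := c)
    (by linarith) one_pos hc
  apply h.congr_fun (fun u hu => by rw [Real.rpow_one, neg_mul]) measurableSet_Ioi

lemma gammaker_integral {p : ℝ} (hp : 0 < p) {c : ℝ} (hc : 0 < c) :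
    ∫ u in Ioi 0, u ^ (p - 1) * Real.exp (-(c * u)) = c ^ (-p) * Real.Gamma p := by
  rw [Real.integral_rpow_mul_exp_neg_mul_Ioi hp hc, one_div, ← Real.rpow_neg_one,
    ← Real.rpow_mul hc.le, neg_one_mul]

-- even function integrability
lemma integrable_of_even_of_Ioi {f : ℝ → ℝ} (hsymm : ∀ t, f (-t) = f t)
    (hmeas : AEStronglyMeasurable f volume) (hf : IntegrableOn f (Ioi 0)) : Integrable f := by
  rw [← integrableOn_univ, ← @Iio_union_Ici _ _ (0 : ℝ), integrableOn_union,
    integrableOn_Ici_iff_integrableOn_Ioi]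
  refine ⟨?_, hf⟩
  rw [← (Measure.measurePreserving_neg (volume : Measure ℝ)).integrableOn_comp_preimage
      (Homeomorph.neg ℝ).measurableEmbedding]
  simp only [Function.comp_def, hsymm, neg_preimage, neg_Iio, neg_zero]
  exact hf


lemma meas_absrpow (e : ℝ) : Measurable (fun t : ℝ => |t| ^ e) := by fun_prop

lemma one_sub_cos_le_sq (x : ℝ) : 1 - Real.cos x ≤ x ^ 2 / 2 := by
  have := Real.one_sub_sq_div_two_le_cos (x := x)
  linarith

lemma integrable_one_sub_cos {α : ℝ} (h0 : 0 < α) (h1 : α < 1) (m : ℝ) :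
    Integrable (fun t : ℝ => (1 - Real.cos (m * t)) * |t| ^ (-(2 + α))) := by
  have hmeas : AEStronglyMeasurable (fun t : ℝ => (1 - Real.cos (m * t)) * |t| ^ (-(2 + α)))
      (volume : Measure ℝ) := by
    apply Measurable.aestronglyMeasurable
    exact ((measurable_const.sub ((Real.measurable_cos).comp
      (measurable_const.mul measurable_id))).mul (meas_absrpow _))
  apply integrable_of_even_of_Ioi (fun t => by simp [mul_comm]) hmeas
  rw [← Ioc_union_Ioi_eq_Ioi (zero_le_one), integrableOn_union]
  constructor
  · have hint : IntegrableOn (fun t : ℝ => m ^ 2 / 2 * t ^ (-α)) (Ioc 0 1) := by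
      refine Integrable.const_mul ?_ _
      have h2 : IntervalIntegrable (fun t : ℝ => t ^ (-α)) volume 0 1 :=
        intervalIntegral.intervalIntegrable_rpow' (by linarith)
      exact (intervalIntegrable_iff_integrableOn_Ioc_of_le zero_le_one).mp h2
    apply hint.mono' (hmeas.restrict)
    filter_upwards [ae_restrict_mem measurableSet_Ioc] with t ht
    have ht0 : 0 < t := ht.1
    rw [Real.norm_eq_abs, abs_mul, abs_of_nonneg (Real.rpow_nonneg (abs_nonneg t) _),
      abs_of_nonneg (by nlinarith [Real.cos_le_one (m * t)] : (0:ℝ) ≤ 1 - Real.cos (m * t)),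
      abs_of_pos ht0]
    have hb : 1 - Real.cos (m * t) ≤ m ^ 2 / 2 * t ^ (2 : ℝ) := by
      have := one_sub_cos_le_sq (m * t)
      rw [Real.rpow_two]
      nlinarith
    calc (1 - Real.cos (m * t)) * t ^ (-(2 + α))
        ≤ (m ^ 2 / 2 * t ^ (2:ℝ)) * t ^ (-(2 + α)) := by
          apply mul_le_mul_of_nonneg_right hb (Real.rpow_nonneg ht0.le _)
      _ = m ^ 2 / 2 * t ^ (-α) := by
          rw [mul_assoc, ← Real.rpow_add ht0]; ring_nf
  · have hint : IntegrableOn (fun t : ℝ => 2 * t ^ (-(2 + α))) (Ioi 1) :=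
      (integrableOn_Ioi_rpow_of_lt (by linarith) one_pos).const_mul 2
    apply hint.mono' (hmeas.restrict)
    filter_upwards [ae_restrict_mem measurableSet_Ioi] with t ht
    have ht0 : (0:ℝ) < t := lt_trans one_pos ht
    rw [Real.norm_eq_abs, abs_mul, abs_of_nonneg (Real.rpow_nonneg (abs_nonneg t) _),
      abs_of_nonneg (by nlinarith [Real.cos_le_one (m * t)] : (0:ℝ) ≤ 1 - Real.cos (m * t)),
      abs_of_pos ht0]
    apply mul_le_mul_of_nonneg_right ?_ (Real.rpow_nonneg ht0.le _)
    nlinarith [Real.neg_one_le_cos (m * t)]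

lemma sq_rpow_eq {t : ℝ} (ht : 0 < t) (e : ℝ) : (t ^ 2) ^ e = t ^ (2 * e) := by
  rw [← Real.rpow_natCast t 2, ← Real.rpow_mul ht.le]
  norm_num

lemma integrable_hker {α a : ℝ} (h0 : 0 < α) (ha : 0 < a) :
    Integrable (fun t : ℝ => (t ^ 2 + a ^ 2) ^ (-(2 + α) / 2)) := by
  have hcont : Continuous (fun t : ℝ => (t ^ 2 + a ^ 2) ^ (-(2 + α) / 2)) := by
    apply Continuous.rpow_const ((continuous_pow 2).add continuous_const)
    intro t; left; show t ^ 2 + a ^ 2 ≠ 0; positivity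
  apply integrable_of_even_of_Ioi (fun t => by rw [neg_pow]; ring_nf) hcont.aestronglyMeasurable
  rw [← Ioc_union_Ioi_eq_Ioi (zero_le_one), integrableOn_union]
  refine ⟨hcont.integrableOn_Ioc, ?_⟩
  have hint : IntegrableOn (fun t : ℝ => t ^ (-(2 + α))) (Ioi 1) :=
    integrableOn_Ioi_rpow_of_lt (by linarith) one_pos
  apply hint.mono' (hcont.aestronglyMeasurable.restrict)
  filter_upwards [ae_restrict_mem measurableSet_Ioi] with t ht
  have ht0 : (0:ℝ) < t := lt_trans one_pos ht
  rw [Real.norm_eq_abs, abs_of_nonneg (Real.rpow_nonneg (by positivity) _)]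
  calc (t ^ 2 + a ^ 2) ^ (-(2 + α) / 2) ≤ (t ^ 2) ^ (-(2 + α) / 2) := by
        apply Real.rpow_le_rpow_of_nonpos (by positivity) (by nlinarith) (by linarith)
    _ = t ^ (-(2 + α)) := by rw [sq_rpow_eq ht0]; ring_nf



lemma crux {α : ℝ} (h0 : 0 < α) (h1 : α < 1) (a : ℝ) (k : ℕ) :
    0 < ∫ t : ℝ, (Real.cos (k * t) - Real.cos ((k + 1 : ℝ) * t)) * (t ^ 2 + a ^ 2) ^ (-(2 + α) / 2) := by
  set p : ℝ := (2 + α) / 2 with hp_def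
  have hp : 0 < p := by rw [hp_def]; linarith
  have hΓ : 0 < Real.Gamma p := Real.Gamma_pos_of_pos hp
  set φ : ℝ → ℝ := fun t => Real.cos (k * t) - Real.cos ((k + 1 : ℝ) * t) with hφ_def
  have hφc : Continuous φ := by fun_prop
  set F : ℝ → ℝ → ℝ := fun t u => φ t * (u ^ (p - 1) * Real.exp (-((t ^ 2 + a ^ 2) * u)))
    with hF_def
  have h0ae : ∀ᵐ t : ℝ, t ≠ 0 := by
    have hset : {t : ℝ | ¬ t ≠ 0} = {0} := by ext t; simp
    rw [ae_iff, hset]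
    exact measure_singleton 0
  have hposae : ∀ᵐ t : ℝ, 0 < t ^ 2 + a ^ 2 := by
    filter_upwards [h0ae] with t ht; positivity
  have hFmeas : AEStronglyMeasurable (Function.uncurry F)
      ((volume : Measure ℝ).prod ((volume : Measure ℝ).restrict (Ioi 0))) := by
    apply Measurable.aestronglyMeasurable
    fun_prop
  -- slices
  have hslice : ∀ t : ℝ, 0 < t ^ 2 + a ^ 2 →
      Integrable (fun u => F t u) ((volume : Measure ℝ).restrict (Ioi 0)) := by
    intro t ht
    exact (gammaker_int hp ht).const_mul (φ t)
  -- inner norm integral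
  have hnormval : ∀ t : ℝ, 0 < t ^ 2 + a ^ 2 →
      (∫ u in Ioi 0, ‖F t u‖) = |φ t| * ((t ^ 2 + a ^ 2) ^ (-p) * Real.Gamma p) := by
    intro t ht
    rw [← gammaker_integral hp ht, ← MeasureTheory.integral_const_mul]
    apply setIntegral_congr_fun measurableSet_Ioi
    intro u hu
    dsimp only
    rw [norm_mul, Real.norm_eq_abs, Real.norm_eq_abs, abs_mul,
      abs_of_nonneg (Real.rpow_nonneg (le_of_lt hu) _), abs_of_pos (Real.exp_pos _)]
  have hφint : Integrable (fun t : ℝ => |φ t| * |t| ^ (-(2 + α))) := by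
    apply ((integrable_one_sub_cos h0 h1 k).add (integrable_one_sub_cos h0 h1 (k + 1))).mono'
    · exact ((hφc.measurable.abs).mul (by fun_prop : Measurable (fun t : ℝ => |t| ^ (-(2 + α))))).aestronglyMeasurable
    · filter_upwards with t
      have habs : |φ t| ≤ (1 - Real.cos (k * t)) + (1 - Real.cos ((k + 1 : ℝ) * t)) := by
        rw [hφ_def, abs_sub_le_iff]
        constructor <;> nlinarith [Real.cos_le_one ((k : ℝ) * t), Real.cos_le_one ((k + 1 : ℝ) * t),
          Real.neg_one_le_cos ((k : ℝ) * t), Real.neg_one_le_cos ((k + 1 : ℝ) * t)]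
      rw [Real.norm_eq_abs, abs_mul, abs_abs, abs_of_nonneg (Real.rpow_nonneg (abs_nonneg t) _)]
      calc |φ t| * |t| ^ (-(2 + α))
          ≤ ((1 - Real.cos (k * t)) + (1 - Real.cos ((k + 1 : ℝ) * t))) * |t| ^ (-(2 + α)) :=
            mul_le_mul_of_nonneg_right habs (Real.rpow_nonneg (abs_nonneg t) _)
        _ = (1 - Real.cos (k * t)) * |t| ^ (-(2 + α))
            + (1 - Real.cos ((k + 1 : ℝ) * t)) * |t| ^ (-(2 + α)) := by ring
  have hkernel_eq : ∀ t : ℝ, t ≠ 0 → (t ^ 2 + a ^ 2) ^ (-p) ≤ |t| ^ (-(2 + α)) := by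
    intro t ht
    have h2 : (0 : ℝ) < t ^ 2 := by positivity
    calc (t ^ 2 + a ^ 2) ^ (-p) ≤ (t ^ 2) ^ (-p) :=
          Real.rpow_le_rpow_of_nonpos h2 (by nlinarith) (by rw [hp_def]; linarith)
      _ = (|t| ^ 2) ^ (-p) := by rw [sq_abs]
      _ = |t| ^ (-(2 + α)) := by
          rw [sq_rpow_eq (abs_pos.mpr ht)]; rw [hp_def]; ring_nf
  have hnorm_int : Integrable (fun t : ℝ => ∫ u in Ioi 0, ‖F t u‖) := by
    apply ((hφint.const_mul (Real.Gamma p)).mono' (hFmeas.norm.integral_prod_right'))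
    filter_upwards [h0ae, hposae] with t ht hpos
    simp only [Function.uncurry_apply_pair]
    rw [Real.norm_eq_abs, hnormval t hpos,
      abs_of_nonneg (by positivity : (0:ℝ) ≤ |φ t| * ((t ^ 2 + a ^ 2) ^ (-p) * Real.Gamma p))]
    calc |φ t| * ((t ^ 2 + a ^ 2) ^ (-p) * Real.Gamma p)
        ≤ |φ t| * (|t| ^ (-(2 + α)) * Real.Gamma p) := by
          apply mul_le_mul_of_nonneg_left ?_ (abs_nonneg _)
          exact mul_le_mul_of_nonneg_right (hkernel_eq t ht) hΓ.le
      _ = Real.Gamma p * (|φ t| * |t| ^ (-(2 + α))) := by ring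
  have hFint : Integrable (Function.uncurry F)
      ((volume : Measure ℝ).prod ((volume : Measure ℝ).restrict (Ioi 0))) := by
    rw [integrable_prod_iff hFmeas]
    exact ⟨by filter_upwards [hposae] with t ht using hslice t ht, hnorm_int⟩
  have hswap := integral_integral_swap hFint
  -- LHS evaluation
  have hL : (∫ t : ℝ, ∫ u in Ioi 0, F t u)
      = Real.Gamma p * ∫ t : ℝ, φ t * (t ^ 2 + a ^ 2) ^ (-(2 + α) / 2) := by
    rw [← MeasureTheory.integral_const_mul]
    apply integral_congr_ae
    filter_upwards [hposae] with t ht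
    rw [MeasureTheory.integral_const_mul, gammaker_integral hp ht]
    ring_nf
    rw [hp_def]; ring_nf
  -- RHS evaluation
  have hR : ∀ u ∈ Ioi (0 : ℝ), (∫ t : ℝ, F t u)
      = u ^ (p - 1) * Real.exp (-(a ^ 2 * u)) * (Real.sqrt (π / u) *
          (Real.exp (-(k : ℝ) ^ 2 / (4 * u)) - Real.exp (-((k : ℝ) + 1) ^ 2 / (4 * u)))) := by
    intro u hu
    have hu0 : (0 : ℝ) < u := hu
    have heq : ∀ t : ℝ, F t u = (u ^ (p - 1) * Real.exp (-(a ^ 2 * u))) *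
        (Real.cos (k * t) * Real.exp (-u * t ^ 2) -
         Real.cos ((k + 1 : ℝ) * t) * Real.exp (-u * t ^ 2)) := by
      intro t
      rw [hF_def]
      simp only []
      rw [show -((t ^ 2 + a ^ 2) * u) = -(a ^ 2 * u) + -u * t ^ 2 by ring, Real.exp_add]
      ring
    simp_rw [heq]
    rw [MeasureTheory.integral_const_mul, integral_sub (integrable_cos_gauss u k hu0)
      (integrable_cos_gauss u ((k : ℝ) + 1) hu0), gauss_cos u k hu0, gauss_cos u ((k : ℝ) + 1) hu0]
    ring
  -- positivity of RHS
  have hRpos : 0 < ∫ u in Ioi 0, ∫ t : ℝ, F t u := by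
    have hgint : IntegrableOn (fun u => ∫ t : ℝ, F t u) (Ioi 0) := by
      have := hFint.integral_prod_right
      exact this
    have hnonneg : 0 ≤ᵐ[volume.restrict (Ioi (0:ℝ))] (fun u => ∫ t : ℝ, F t u) := by
      filter_upwards [ae_restrict_mem measurableSet_Ioi] with u hu
      have hu0 : (0:ℝ) < u := hu
      rw [hR u hu]
      have h1 : Real.exp (-((k:ℝ)+1) ^ 2 / (4 * u)) ≤ Real.exp (-(k : ℝ) ^ 2 / (4 * u)) := by
        apply Real.exp_le_exp.mpr
        rw [div_le_div_iff_of_pos_right (by positivity)]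
        have : (0:ℝ) ≤ (k : ℝ) := Nat.cast_nonneg k
        nlinarith
      exact mul_nonneg (mul_nonneg (Real.rpow_pos_of_pos hu0 _).le (Real.exp_pos _).le)
        (mul_nonneg (Real.sqrt_nonneg _) (sub_nonneg.mpr h1))
    rw [setIntegral_pos_iff_support_of_nonneg_ae hnonneg hgint]
    have hsupp : Ioi (0:ℝ) ⊆ Function.support (fun u => ∫ t : ℝ, F t u) := by
      intro u hu
      have hu0 : (0:ℝ) < u := hu
      rw [Function.mem_support, hR u hu]
      have h1 : Real.exp (-((k:ℝ)+1) ^ 2 / (4 * u)) < Real.exp (-(k : ℝ) ^ 2 / (4 * u)) := by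
        apply Real.exp_lt_exp.mpr
        rw [div_lt_div_iff_of_pos_right (by positivity)]
        have : (0:ℝ) ≤ (k : ℝ) := Nat.cast_nonneg k
        nlinarith
      have h2 : 0 < Real.sqrt (π / u) := Real.sqrt_pos.mpr (by positivity)
      exact (mul_pos (mul_pos (Real.rpow_pos_of_pos hu0 _) (Real.exp_pos _))
        (mul_pos h2 (sub_pos.mpr h1))).ne'
    rw [inter_eq_right.mpr hsupp, volume_Ioi]
    simp
  rw [hswap] at hL
  rw [hL] at hRpos
  have hX : 0 < ∫ t : ℝ, φ t * (t ^ 2 + a ^ 2) ^ (-(2 + α) / 2) := by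
    rcases mul_pos_iff.mp hRpos with ⟨_, h⟩ | ⟨h, _⟩
    · exact h
    · linarith
  exact hX

section main
variable {α R : ℝ}

lemma P1 (h0 : 0 < α) : ∀ t : ℝ, |t| ^ (-(2 + α)) = (t ^ 2 + 0 ^ 2) ^ (-(2 + α) / 2) := by
  intro t
  have hz : (0:ℝ) ^ 2 = 0 := by norm_num
  rcases eq_or_ne t 0 with rfl | ht
  · rw [abs_zero, hz, add_zero, Real.zero_rpow (by intro h; linarith),
      Real.zero_rpow (by intro h; linarith)]
  · have hb : 0 < |t| := abs_pos.mpr ht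
    rw [hz, add_zero, ← sq_abs, sq_rpow_eq hb]
    ring_nf

lemma P2 (hR : 0 < R) : ∀ t : ℝ, t ≠ 0 →
    (1 + (2 * R / |t|) ^ 2) ^ (-(2 + α) / 2) * |t| ^ (-(2 + α))
      = (t ^ 2 + (2 * R) ^ 2) ^ (-(2 + α) / 2) := by
  intro t ht
  have hb : 0 < |t| := abs_pos.mpr ht
  have h1 : 1 + (2 * R / |t|) ^ 2 = (t ^ 2 + (2 * R) ^ 2) / |t| ^ 2 := by
    rw [div_pow, sq_abs]
    field_simp [pow_ne_zero 2 ht]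
  have h2 : |t| ^ (-(2 + α)) = (|t| ^ 2) ^ (-(2 + α) / 2) := by
    rw [sq_rpow_eq hb]; ring_nf
  rw [h1, Real.div_rpow (by positivity) (by positivity), h2,
    div_mul_cancel₀ _ (ne_of_gt (Real.rpow_pos_of_pos (by positivity) _))]

lemma integrand2_ae (hR : 0 < R) (m : ℝ) :
    (fun t : ℝ => (1 + Real.cos (m * t)) * (1 + (2 * R / |t|) ^ 2) ^ (-(2 + α) / 2)
        * |t| ^ (-(2 + α)))
      =ᵐ[volume] (fun t : ℝ => (1 + Real.cos (m * t)) * (t ^ 2 + (2 * R) ^ 2) ^ (-(2 + α) / 2)) := by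
  have h0ae : ∀ᵐ t : ℝ, t ≠ 0 := by
    have hset : {t : ℝ | ¬ t ≠ 0} = {0} := by ext t; simp
    rw [ae_iff, hset]
    exact measure_singleton 0
  filter_upwards [h0ae] with t ht
  rw [mul_assoc, P2 hR t ht]

lemma integrable_nice (h0 : 0 < α) (hR : 0 < R) (m : ℝ) :
    Integrable (fun t : ℝ => (1 + Real.cos (m * t)) * (t ^ 2 + (2 * R) ^ 2) ^ (-(2 + α) / 2)) := by
  apply ((integrable_hker h0 (by linarith : (0:ℝ) < 2 * R)).const_mul 2).mono'
  · apply Measurable.aestronglyMeasurable; fun_prop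
  · filter_upwards with t
    rw [Real.norm_eq_abs, abs_mul, abs_of_nonneg (Real.rpow_nonneg (by positivity) _)]
    apply mul_le_mul_of_nonneg_right ?_ (Real.rpow_nonneg (by positivity) _)
    rw [abs_le]
    constructor <;> nlinarith [Real.cos_le_one (m * t), Real.neg_one_le_cos (m * t)]

lemma integrable_orig (h0 : 0 < α) (hR : 0 < R) (m : ℝ) :
    Integrable (fun t : ℝ => (1 + Real.cos (m * t)) * (1 + (2 * R / |t|) ^ 2) ^ (-(2 + α) / 2)
      * |t| ^ (-(2 + α))) :=
  (integrable_nice h0 hR m).congr (integrand2_ae hR m).symm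

lemma hker_pos_integral (h0 : 0 < α) (hR : 0 < R) :
    0 < ∫ t : ℝ, (t ^ 2 + (2 * R) ^ 2) ^ (-(2 + α) / 2) := by
  rw [integral_pos_iff_support_of_nonneg_ae
    (Eventually.of_forall (fun t => Real.rpow_nonneg (by positivity) _))
    (integrable_hker h0 (by linarith))]
  have : Function.support (fun t : ℝ => (t ^ 2 + (2 * R) ^ 2) ^ (-(2 + α) / 2)) = univ := by
    ext t; simp only [Function.mem_support, mem_univ, iff_true]
    exact (Real.rpow_pos_of_pos (by positivity) _).ne'
  rw [this]
  simp


/-- **The eigenvalue sequence is strictly increasing.** Let `α ∈ (0,1)` and let `R > 0` be the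
(unique) value with `λ₁(R) = 0`. Then both integrals defining `λ_k(R)` converge absolutely for
every `k`, and `λ₀(R) < 0 = λ₁(R) < λ₂(R) < λ₃(R) < ⋯`, i.e. `k ↦ λ_k(R)` is strictly
increasing with `λ₀(R) < 0` and `λ₁(R) = 0`. -/
theorem eigenvalues_strictly_increasing
    (α R : ℝ) (hα : α ∈ Set.Ioo (0:ℝ) 1) (hR : 0 < R) (hR1 : lamK α R 1 = 0)
    (hRuniq : ∀ R' : ℝ, 0 < R' → lamK α R' 1 = 0 → R' = R) :
    (∀ k : ℕ, Integrable (fun t : ℝ => (1 - Real.cos (k * t)) * |t| ^ (-(2 + α)))) ∧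
    (∀ k : ℕ, Integrable (fun t : ℝ =>
      (1 + Real.cos (k * t)) * (1 + (2 * R / |t|) ^ 2) ^ (-(2 + α) / 2) * |t| ^ (-(2 + α)))) ∧
    lamK α R 0 < 0 ∧ lamK α R 1 = 0 ∧ StrictMono (lamK α R) := by
  obtain ⟨h0, h1⟩ := hα
  refine ⟨fun k => integrable_one_sub_cos h0 h1 k, fun k => integrable_orig h0 hR k, ?_, hR1, ?_⟩
  · -- lamK α R 0 < 0
    have e1 : (∫ t : ℝ, (1 - Real.cos ((0:ℕ) * t)) * |t| ^ (-(2 + α))) = 0 := by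
      simp
    have e2 : (∫ t : ℝ, (1 + Real.cos ((0:ℕ) * t)) * (1 + (2 * R / |t|) ^ 2) ^ (-(2 + α) / 2)
        * |t| ^ (-(2 + α))) = 2 * ∫ t : ℝ, (t ^ 2 + (2 * R) ^ 2) ^ (-(2 + α) / 2) := by
      rw [integral_congr_ae (integrand2_ae hR (((0:ℕ):ℝ))), ← MeasureTheory.integral_const_mul]
      apply integral_congr_ae; filter_upwards with t
      push_cast
      rw [zero_mul, Real.cos_zero]
      ring
    rw [lamK, e1, e2]
    have := hker_pos_integral h0 hR (R := R)
    linarith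
  · -- strict mono
    apply strictMono_nat_of_lt_succ
    intro k
    have hlam : ∀ j : ℕ, lamK α R j
        = (∫ t : ℝ, (1 - Real.cos ((j:ℝ) * t)) * |t| ^ (-(2 + α)))
          - ∫ t : ℝ, (1 + Real.cos ((j:ℝ) * t)) * (t ^ 2 + (2 * R) ^ 2) ^ (-(2 + α) / 2) := by
      intro j
      rw [lamK, integral_congr_ae (integrand2_ae hR (j:ℝ))]
    have hlamk := hlam k
    have hlamk1 := hlam (k + 1)
    push_cast at hlamk1
    have hD1 : (∫ t : ℝ, (1 - Real.cos (((k:ℝ)+1) * t)) * |t| ^ (-(2 + α)))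
        - (∫ t : ℝ, (1 - Real.cos ((k:ℝ) * t)) * |t| ^ (-(2 + α)))
        = ∫ t : ℝ, (Real.cos ((k:ℝ) * t) - Real.cos (((k:ℝ) + 1) * t))
            * (t ^ 2 + 0 ^ 2) ^ (-(2 + α) / 2) := by
      rw [← integral_sub (integrable_one_sub_cos h0 h1 _) (integrable_one_sub_cos h0 h1 _)]
      apply integral_congr_ae; filter_upwards with t
      rw [← P1 h0]
      ring
    have hD2 : (∫ t : ℝ, (1 + Real.cos ((k:ℝ) * t)) * (t ^ 2 + (2 * R) ^ 2) ^ (-(2 + α) / 2))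
        - (∫ t : ℝ, (1 + Real.cos (((k:ℝ)+1) * t)) * (t ^ 2 + (2 * R) ^ 2) ^ (-(2 + α) / 2))
        = ∫ t : ℝ, (Real.cos ((k:ℝ) * t) - Real.cos (((k:ℝ) + 1) * t))
            * (t ^ 2 + (2 * R) ^ 2) ^ (-(2 + α) / 2) := by
      rw [← integral_sub (integrable_nice h0 hR _) (integrable_nice h0 hR _)]
      apply integral_congr_ae; filter_upwards with t
      ring
    have c1 := crux h0 h1 0 k
    have c2 := crux h0 h1 (2 * R) k
    linarith [hlamk, hlamk1, hD1, hD2, c1, c2]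
end main
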